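/- Let h ∈ ℂ^M be a channel vector with h_m ≠ 0 for all m, and let 1 ≤ M_s < M. Define γ = (∑_{m'=M_s}^{M−1} |h_{m'}|^4 / ∑_{m''=0}^{M_s−1} |h_{m''}|^4)^{1/3} and set w_m = −γ·conj(h_m) for m < M_s and w_m = conj(h_m) for m ≥ M_s (up to an arbitrary positive normalization α). Then the zero third-order distortion constraint ∑_{m=0}^{M−1} h_m w_m |w_m|^2 = 0 holds. -/

import Mathlib

theorem z3ro_general_channel_zero_distortion (M Ms : ℕ) (hMs : 1 ≤ Ms) (hMsM : Ms < M)
    (h : ℕ → ℂ) (hne : ∀ m, h m ≠ 0)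
    (γ : ℝ)
    (hγ : γ = ((∑ m' ∈ Finset.Ico Ms M, (‖h m'‖) ^ 4) /
               (∑ m'' ∈ Finset.range Ms, (‖h m''‖) ^ 4)) ^ ((1 : ℝ)/3))
    (α : ℝ) (hα : 0 < α)
    (w : ℕ → ℂ)
    (hw : ∀ m, w m = if m < Ms then (α : ℂ) * (-(γ : ℂ)) * (starRingEnd ℂ) (h m)
                     else (α : ℂ) * (starRingEnd ℂ) (h m)) :
    ∑ m ∈ Finset.range M, h m * w m * (((‖w m‖ : ℝ) : ℂ)) ^ 2 = 0 := by
  set S1 : ℝ := ∑ m'' ∈ Finset.range Ms, (‖h m''‖) ^ 4 with hS1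
  set S2 : ℝ := ∑ m' ∈ Finset.Ico Ms M, (‖h m'‖) ^ 4 with hS2
  have hS1pos : 0 < S1 := by
    apply Finset.sum_pos
    · intro i _
      exact pow_pos (norm_pos_iff.mpr (hne i)) 4
    · exact Finset.nonempty_range_iff.mpr (by omega)
  have hS2nn : 0 ≤ S2 := Finset.sum_nonneg fun i _ => pow_nonneg (norm_nonneg _) 4
  have hγnn : 0 ≤ γ := hγ ▸ Real.rpow_nonneg (div_nonneg hS2nn hS1pos.le) _
  have hγ3 : γ ^ (3 : ℕ) * S1 = S2 := by
    have : γ ^ (3 : ℕ) = S2 / S1 := by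
      rw [hγ, ← Real.rpow_natCast (_ ^ ((1:ℝ)/3)) 3, ← Real.rpow_mul (div_nonneg hS2nn hS1pos.le)]
      norm_num
    rw [this, div_mul_cancel₀ _ hS1pos.ne']
  -- rewrite each term
  have hterm : ∀ m, h m * w m * ((‖w m‖ : ℂ)) ^ 2 =
      if m < Ms then -((α:ℂ)^3 * (γ:ℂ)^3 * ((‖h m‖ : ℂ))^4)
      else (α:ℂ)^3 * ((‖h m‖ : ℂ))^4 := by
    intro m
    have habs2 : ((‖h m‖ : ℂ))^2 = h m * (starRingEnd ℂ) (h m) := by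
      rw [Complex.mul_conj, Complex.normSq_eq_norm_sq]
      push_cast
      ring
    rw [hw m]
    by_cases hm : m < Ms
    · simp only [hm, if_true]
      have : ‖(α : ℂ) * (-(γ : ℂ)) * (starRingEnd ℂ) (h m)‖ =
          α * γ * ‖h m‖ := by
        simp [map_mul, abs_of_pos hα, abs_of_nonneg hγnn]
      rw [this]
      push_cast
      have : ((‖h m‖ : ℂ))^4 = (h m * (starRingEnd ℂ) (h m))^2 := by
        rw [← habs2]; ring
      rw [this]
      rw [mul_pow, mul_pow, habs2]
      ring
    · simp only [hm, if_false]
      have : ‖(α : ℂ) * (starRingEnd ℂ) (h m)‖ = α * ‖h m‖ := by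
        simp [map_mul, abs_of_pos hα]
      rw [this]
      push_cast
      have : ((‖h m‖ : ℂ))^4 = (h m * (starRingEnd ℂ) (h m))^2 := by
        rw [← habs2]; ring
      rw [this]
      rw [mul_pow, habs2]
      ring
  rw [Finset.sum_congr rfl fun m _ => hterm m]
  rw [← Finset.sum_range_add_sum_Ico _ hMsM.le]
  have h1 : ∑ m ∈ Finset.range Ms, (if m < Ms then -((α:ℂ)^3 * (γ:ℂ)^3 * ((‖h m‖ : ℂ))^4)
      else (α:ℂ)^3 * ((‖h m‖ : ℂ))^4) =
      -((α:ℂ)^3 * (γ:ℂ)^3 * (S1 : ℂ)) := by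
    rw [Finset.sum_congr rfl fun m hm => if_pos (Finset.mem_range.mp hm)]
    push_cast [hS1]
    rw [Finset.mul_sum, ← Finset.sum_neg_distrib]
  have h2 : ∑ m ∈ Finset.Ico Ms M, (if m < Ms then -((α:ℂ)^3 * (γ:ℂ)^3 * ((‖h m‖ : ℂ))^4)
      else (α:ℂ)^3 * ((‖h m‖ : ℂ))^4) =
      (α:ℂ)^3 * (S2 : ℂ) := by
    rw [Finset.sum_congr rfl fun m hm => if_neg (by
      have := (Finset.mem_Ico.mp hm).1; omega)]
    push_cast [hS2, Finset.mul_sum]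
    rfl
  rw [h1, h2]
  have : ((γ:ℂ))^3 * (S1 : ℂ) = (S2 : ℂ) := by
    push_cast [← hγ3]
    ring
  rw [mul_assoc, this]
  ring
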